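/- If f, g : (V, P) → (W, S) are weakly homotopic weak morphisms of path complexes, then the induced chain maps f_*, g_* : Ω_*(P) → Ω_*(S) are chain homotopic, and hence f_* = g_* : H_n(P) → H_n(S) for all n. Consequently, if (V, P) and (W, S) are weakly homotopy equivalent path complexes, then H_n(P) ≅ H_n(S) for all n; moreover, if the weak homotopy equivalence is realized by weak morphisms f and g, then f_* and g_* are mutually inverse isomorphisms of the path homology groups. -/

import Mathlib

/-!
STATEMENT 10: If f, g : (V, P) → (W, S) are weakly homotopic weak morphisms of path
complexes, then the induced chain maps f_*, g_* : Ω_*(P) → Ω_*(S) are chain homotopic,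
and hence f_* = g_* : H_n(P) → H_n(S) for all n.  Consequently, weakly homotopy
equivalent path complexes have isomorphic path homology; moreover, if the weak homotopy
equivalence is realized by weak morphisms f and g, then f_* and g_* are mutually inverse
isomorphisms.

The cylinder P × I is modelled on V ⊕ V; "f_* = g_* on H_n" is expressed at the level of
cycles (the difference of the images of a cycle is a boundary), and "mutually inverse"
by g_*(f_* z) − z and f_*(g_* w) − w being boundaries, together with H_n(P) ≅ H_n(S).
-/

open scoped Classical

namespace PH

/-- An elementary path (a list of vertices) is regular if no two consecutive
vertices coincide. -/
def Reg {V : Type} (l : List V) : Prop := l.Chain' (· ≠ ·)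

/-- The regular boundary operator ∂ on the span of regular paths (all degrees at once,
with the convention that ∂ vanishes on 0-paths): on a basis path `p` of length ≥ 2 it is
the alternating sum of the vertex deletions, with non-regular terms replaced by 0. -/
noncomputable def dReg (K : Type) [Field K] (V : Type) :
    (List V →₀ K) →ₗ[K] (List V →₀ K) :=
  Finsupp.lsum K fun p => LinearMap.toSpanSingleton K (List V →₀ K)
    (if 2 ≤ p.length then
      ∑ q : Fin p.length, ((-1 : K) ^ (q : ℕ)) •
        (if Reg (p.eraseIdx (q : ℕ)) then Finsupp.single (p.eraseIdx (q : ℕ)) (1 : K) else 0)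
    else 0)

/-- The map induced on regular chains by a vertex map f:
`e_{i₀…iₙ} ↦ e_{f(i₀)…f(iₙ)}` if the image path is regular, and 0 otherwise. -/
noncomputable def find (K : Type) [Field K] {V W : Type} (f : V → W) :
    (List V →₀ K) →ₗ[K] (List W →₀ K) :=
  Finsupp.lsum K fun p => LinearMap.toSpanSingleton K (List W →₀ K)
    (if Reg (p.map f) then Finsupp.single (p.map f) (1 : K) else 0)

/-- `A_n(P)`: the span of the regular allowed n-paths (lists of n+1 vertices in P). -/
def Asub (K : Type) [Field K] {V : Type} (P : Set (List V)) (n : ℕ) :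
    Submodule K (List V →₀ K) :=
  Finsupp.supported K K {l | l ∈ P ∧ l.length = n + 1 ∧ Reg l}

/-- `Ω_n(P)`: the ∂-invariant allowed regular n-chains. -/
noncomputable def OmegaSub (K : Type) [Field K] {V : Type} (P : Set (List V)) (n : ℕ) :
    Submodule K (List V →₀ K) :=
  Asub K P n ⊓ Submodule.comap (dReg K V) (Asub K P (n - 1))

/-- The n-cycles of Ω_*(P). -/
noncomputable def Zsub (K : Type) [Field K] {V : Type} (P : Set (List V)) (n : ℕ) :
    Submodule K (List V →₀ K) :=
  OmegaSub K P n ⊓ LinearMap.ker (dReg K V)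

/-- The n-boundaries ∂Ω_{n+1}(P). -/
noncomputable def Bsub (K : Type) [Field K] {V : Type} (P : Set (List V)) (n : ℕ) :
    Submodule K (List V →₀ K) :=
  Submodule.map (dReg K V) (OmegaSub K P (n + 1))

/-- Path homology `H_n(P)`, realized as the image of the n-cycles in the quotient of the
ambient space by the n-boundaries (so `H_n(P) ≅ Z_n/(Z_n ∩ B_n) = Z_n/B_n`). -/
noncomputable def Hsm (K : Type) [Field K] {V : Type} (P : Set (List V)) (n : ℕ) :
    Submodule K ((List V →₀ K) ⧸ Bsub K P n) :=
  Submodule.map (Bsub K P n).mkQ (Zsub K P n)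

/-- A path complex on V: a set of non-empty elementary paths (lists) closed under
removing the last (`dropLast`) or the first (`tail`) vertex. -/
structure PathComplex (V : Type) where
  carrier : Set (List V)
  not_nil : ∀ p ∈ carrier, p ≠ []
  dropLast_mem : ∀ p ∈ carrier, 2 ≤ p.length → p.dropLast ∈ carrier
  tail_mem : ∀ p ∈ carrier, 2 ≤ p.length → p.tail ∈ carrier

end PH

namespace PH

def IsWeakMor {V W : Type} (P : Set (List V)) (S : Set (List W)) (f : V → W) : Prop :=
  ∀ p ∈ P, p.map f ∈ S ∨ ¬ Reg (p.map f)

/-- The paths of the cylinder path complex P × I on V ⊕ V: the paths of P on the bottom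
copy, the paths of P on the top copy, and the mixed paths
i₀…i_k i_k'…i_n' with i₀…i_k i_{k+1}…i_n ∈ P. -/
def cylSet {V : Type} (P : Set (List V)) : Set (List (V ⊕ V)) :=
  {l | (∃ p ∈ P, l = p.map Sum.inl) ∨ (∃ p ∈ P, l = p.map Sum.inr) ∨
       (∃ p ∈ P, ∃ k : ℕ, k < p.length ∧
          l = (p.take (k + 1)).map Sum.inl ++ (p.drop k).map Sum.inr)}

/-- Weak one-step homotopy f ∼₁ g via a weak morphism from the cylinder restricting to
f and g (in either order) on the two ends. -/
def WOneStep {V W : Type} (P : Set (List V)) (S : Set (List W)) (f g : V → W) : Prop :=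
  ∃ F : V ⊕ V → W, IsWeakMor (cylSet P) S F ∧
    (((∀ v : V, F (Sum.inl v) = f v) ∧ (∀ v : V, F (Sum.inr v) = g v)) ∨
     ((∀ v : V, F (Sum.inl v) = g v) ∧ (∀ v : V, F (Sum.inr v) = f v)))

/-- Weak homotopy f ∼ g: a finite chain of weak one-step homotopies through weak
morphisms. -/
def WHomotopic {V W : Type} (P : Set (List V)) (S : Set (List W)) (f g : V → W) : Prop :=
  Relation.ReflTransGen
    (fun a b => IsWeakMor P S a ∧ IsWeakMor P S b ∧ WOneStep P S a b) f g

end PH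


/- ======================= auxiliary development ======================= -/

namespace PH

section ListLemmas
variable {V W : Type}
open List

theorem take_eraseIdx' {α : Type} : ∀ (p : List α) (q k : ℕ), q ≤ k →
    (p.take (k+1)).eraseIdx q = (p.eraseIdx q).take k := by
  intro p
  induction p with
  | nil => simp
  | cons a t ih =>
    intro q k hq
    cases q with
    | zero => simp
    | succ q' =>
      cases k with
      | zero => omega
      | succ k' => simp [eraseIdx_cons_succ, ih q' k' (by omega)]

theorem drop_eraseIdx' {α : Type} : ∀ (p : List α) (q k : ℕ), q ≤ k →
    (p.eraseIdx q).drop k = p.drop (k+1) := by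
  intro p
  induction p with
  | nil => simp
  | cons a t ih =>
    intro q k hq
    cases q with
    | zero =>
      cases k with
      | zero => simp
      | succ k' => simp
    | succ q' =>
      cases k with
      | zero => omega
      | succ k' => simp [eraseIdx_cons_succ, ih q' k' (by omega)]

theorem take_eraseIdx_ge {α : Type} : ∀ (p : List α) (k j : ℕ), k ≤ j →
    (p.eraseIdx j).take k = p.take k := by
  intro p
  induction p with
  | nil => simp
  | cons a t ih =>
    intro k j hk
    cases j with
    | zero => cases k with
      | zero => simp
      | succ => omega
    | succ j' =>
      cases k with
      | zero => simp
      | succ k' => simp [eraseIdx_cons_succ, ih k' j' (by omega)]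

theorem drop_eraseIdx_ge {α : Type} : ∀ (p : List α) (k j : ℕ), k ≤ j →
    (p.drop k).eraseIdx (j - k) = (p.eraseIdx j).drop k := by
  intro p
  induction p with
  | nil => simp
  | cons a t ih =>
    intro k j hk
    cases k with
    | zero => simp
    | succ k' =>
      cases j with
      | zero => omega
      | succ j' => simpa using ih k' j' (by omega)

theorem eraseIdx_map' {α β : Type} (f : α → β) : ∀ (l : List α) (i : ℕ),
    (l.map f).eraseIdx i = (l.eraseIdx i).map f := by
  intro l
  induction l with
  | nil => intro i; simp
  | cons a t ih => intro i; cases i with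
    | zero => simp
    | succ j => simp [eraseIdx_cons_succ, ih]

theorem len_eraseIdx {α : Type} (l : List α) (q : ℕ) (hq : q < l.length) :
    (l.eraseIdx q).length = l.length - 1 := by
  rw [List.length_eraseIdx]; simp [hq]

theorem reg_iff (l : List V) :
    Reg l ↔ ∀ (i : ℕ) (h : i + 1 < l.length), l[i] ≠ l[i+1] := by
  rw [Reg, List.Chain', List.isChain_iff_getElem]

theorem reg_of_reg_map (f : V → W) (l : List V) (h : Reg (l.map f)) : Reg l := by
  rw [Reg, List.Chain', List.isChain_map] at h
  exact List.IsChain.imp (fun ⦃a b⦄ hab he => hab (congrArg f he)) h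

theorem not_reg_map (f : V → W) (l : List V) (h : ¬ Reg l) : ¬ Reg (l.map f) :=
  fun hr => h (reg_of_reg_map f l hr)

theorem not_reg_eraseIdx_lt (l : List V) (j q : ℕ) (hj : j + 1 < l.length)
    (he : l[j] = l[j+1]) (hq : q < j) : ¬ Reg (l.eraseIdx q) := by
  rw [reg_iff]
  push_neg
  have hlen := len_eraseIdx l q (by omega)
  refine ⟨j - 1, by omega, ?_⟩
  have h1 : j - 1 + 1 = j := by omega
  rw [List.getElem_eraseIdx, List.getElem_eraseIdx, dif_neg (by omega), dif_neg (by omega)]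
  simp only [h1]
  exact he

theorem not_reg_eraseIdx_gt (l : List V) (j q : ℕ) (hj : j + 1 < l.length)
    (he : l[j] = l[j+1]) (hq : j + 1 < q) (hq2 : q < l.length) : ¬ Reg (l.eraseIdx q) := by
  rw [reg_iff]
  push_neg
  have hlen := len_eraseIdx l q (by omega)
  refine ⟨j, by omega, ?_⟩
  rw [List.getElem_eraseIdx, List.getElem_eraseIdx, dif_pos (by omega), dif_pos (by omega)]
  exact he

theorem eraseIdx_eq_of_pair : ∀ (l : List V) (j : ℕ) (hj : j + 1 < l.length),
    l[j] = l[j+1] → l.eraseIdx j = l.eraseIdx (j+1) := by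
  intro l
  induction l with
  | nil => simp
  | cons a t ih =>
    intro j hj he
    cases j with
    | zero =>
      simp only [List.eraseIdx_cons_succ, List.eraseIdx_cons_zero]
      cases t with
      | nil => simp at hj
      | cons b t' =>
        simp only [List.eraseIdx_cons_zero]
        have : a = b := by simpa using he
        rw [this]
    | succ j' =>
      simp only [List.eraseIdx_cons_succ]
      congr 1
      exact ih j' (by simpa using hj) (by simpa using he)

/-- The mixed cylinder path i₀…i_k i_k'…i_n'. -/
def mix (p : List V) (k : ℕ) : List (V ⊕ V) :=
  (p.take (k+1)).map Sum.inl ++ (p.drop k).map Sum.inr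

/-- The degenerate split path i₀…i_{k-1} i_k'…i_n'. -/
def dSp (p : List V) (k : ℕ) : List (V ⊕ V) :=
  (p.take k).map Sum.inl ++ (p.drop k).map Sum.inr

theorem length_mix (p : List V) (k : ℕ) (hk : k < p.length) :
    (mix p k).length = p.length + 1 := by
  simp [mix]; omega

theorem dSp_zero (p : List V) : dSp p 0 = p.map Sum.inr := by simp [dSp]

theorem dSp_len (p : List V) : dSp p p.length = p.map Sum.inl := by simp [dSp]

theorem reg_of_mix (p : List V) (k : ℕ) (h : Reg (mix p k)) : Reg p := by
  rw [Reg, mix, List.Chain', List.isChain_append] at h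
  obtain ⟨h1, h2, -⟩ := h
  have hb : Reg (p.take (k+1)) := reg_of_reg_map Sum.inl _ h1
  have ht : Reg (p.drop k) := reg_of_reg_map Sum.inr _ h2
  rw [reg_iff] at hb ht ⊢
  intro i hi
  by_cases hik : i + 1 ≤ k
  · have := hb i (by simp [List.length_take]; omega)
    simpa [List.getElem_take] using this
  · have h' := ht (i - k) (by simp [List.length_drop]; omega)
    have e1 : k + (i - k) = i := by omega
    have e2 : k + (i - k + 1) = i + 1 := by omega
    simpa [List.getElem_drop, e1, e2] using h'

theorem mix_erase_lt (p : List V) (k q : ℕ) (hq : q < k) (hk : k < p.length) :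
    (mix p k).eraseIdx q = mix (p.eraseIdx q) (k - 1) := by
  have hq1 : q < ((p.take (k+1)).map (Sum.inl : V → V ⊕ V)).length := by
    simp [List.length_take]; omega
  rw [mix, List.eraseIdx_append_of_lt_length hq1, eraseIdx_map',
    take_eraseIdx' p q k (le_of_lt hq), mix]
  have h2 := drop_eraseIdx' p q (k-1) (by omega)
  rw [show k-1+1 = k by omega] at h2
  rw [h2, show k-1+1 = k by omega]

theorem mix_erase_eq (p : List V) (k : ℕ) (hk : k < p.length) :
    (mix p k).eraseIdx k = dSp p k := by
  have hq1 : k < ((p.take (k+1)).map (Sum.inl : V → V ⊕ V)).length := by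
    simp [List.length_take]; omega
  rw [mix, List.eraseIdx_append_of_lt_length hq1, eraseIdx_map',
    take_eraseIdx' p k k le_rfl, take_eraseIdx_ge p k k le_rfl, dSp]

theorem mix_erase_eq1 (p : List V) (k : ℕ) (hk : k < p.length) :
    (mix p k).eraseIdx (k+1) = dSp p (k+1) := by
  have hq1 : ((p.take (k+1)).map (Sum.inl : V → V ⊕ V)).length ≤ k + 1 := by
    simp [List.length_take]
  rw [mix, List.eraseIdx_append_of_length_le hq1]
  have hl : ((p.take (k+1)).map (Sum.inl : V → V ⊕ V)).length = k + 1 := by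
    simp [List.length_take]; omega
  rw [hl, Nat.sub_self, eraseIdx_map', List.eraseIdx_zero, List.tail_drop, dSp]

theorem mix_erase_gt (p : List V) (k q : ℕ) (hq : k + 1 < q) (hk : k < p.length)
    (hq2 : q ≤ p.length) : (mix p k).eraseIdx q = mix (p.eraseIdx (q-1)) k := by
  have hl : ((p.take (k+1)).map (Sum.inl : V → V ⊕ V)).length = k + 1 := by
    simp [List.length_take]; omega
  have hle : ((p.take (k+1)).map (Sum.inl : V → V ⊕ V)).length ≤ q := by omega
  have h2 := drop_eraseIdx_ge p k (q-1) (by omega)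
  rw [show q-1-k = q-(k+1) by omega] at h2
  rw [mix, List.eraseIdx_append_of_length_le hle, hl, eraseIdx_map', h2, mix,
    take_eraseIdx_ge p (k+1) (q-1) (by omega)]

theorem mix_mem_cylSet {P : Set (List V)} {p : List V} (hp : p ∈ P) (k : ℕ)
    (hk : k < p.length) : mix p k ∈ cylSet P :=
  Or.inr (Or.inr ⟨p, hp, k, hk, rfl⟩)

end ListLemmas

section FinsuppLemmas
variable (K : Type) [Field K] {V W U : Type}

theorem find_single (f : V → W) (p : List V) :
    find K f (Finsupp.single p 1) =
      if Reg (p.map f) then Finsupp.single (p.map f) (1:K) else 0 := by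
  rw [find, Finsupp.lsum_single, LinearMap.toSpanSingleton_apply, one_smul]

theorem dReg_single (p : List V) :
    dReg K V (Finsupp.single p 1) =
      if 2 ≤ p.length then
        ∑ q ∈ Finset.range p.length, ((-1 : K) ^ q) •
          (if Reg (p.eraseIdx q) then Finsupp.single (p.eraseIdx q) (1 : K) else 0)
      else 0 := by
  rw [dReg, Finsupp.lsum_single, LinearMap.toSpanSingleton_apply, one_smul]
  by_cases h : 2 ≤ p.length
  · rw [if_pos h, if_pos h]
    exact Fin.sum_univ_eq_sum_range (fun q => ((-1 : K) ^ q) •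
      (if Reg (p.eraseIdx q) then Finsupp.single (p.eraseIdx q) (1 : K) else 0)) p.length
  · rw [if_neg h, if_neg h]

/-- key collapse lemma: ∂ of an irregular basis path is 0. -/
theorem dReg_single_irreg (m : List V) (hm : ¬ Reg m) :
    dReg K V (Finsupp.single m (1:K)) = 0 := by
  rw [dReg_single]
  by_cases hl : 2 ≤ m.length
  swap
  · rw [if_neg hl]
  rw [if_pos hl]
  obtain ⟨j, hj, he⟩ : ∃ j, ∃ (h : j + 1 < m.length), m[j] = m[j+1] := by
    rw [reg_iff] at hm
    push_neg at hm
    obtain ⟨i, h, hi⟩ := hm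
    exact ⟨i, h, hi⟩
  have hsub : ({j, j+1} : Finset ℕ) ⊆ Finset.range m.length := by
    intro x hx
    simp only [Finset.mem_insert, Finset.mem_singleton] at hx
    rcases hx with rfl | rfl <;> simp [Finset.mem_range] <;> omega
  rw [← Finset.sum_sdiff hsub]
  have hz : ∀ q ∈ Finset.range m.length \ ({j, j+1} : Finset ℕ),
      ((-1 : K) ^ q) •
        (if Reg (m.eraseIdx q) then Finsupp.single (m.eraseIdx q) (1 : K) else 0) = 0 := by
    intro q hq
    simp only [Finset.mem_sdiff, Finset.mem_range, Finset.mem_insert,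
      Finset.mem_singleton] at hq
    obtain ⟨hq1, hq2⟩ := hq
    push_neg at hq2
    have : ¬ Reg (m.eraseIdx q) := by
      rcases Nat.lt_or_ge q j with h | h
      · exact not_reg_eraseIdx_lt m j q hj he h
      · have : j + 1 < q := by omega
        exact not_reg_eraseIdx_gt m j q hj he this hq1
    rw [if_neg this, smul_zero]
  rw [Finset.sum_eq_zero hz, zero_add, Finset.sum_pair (by omega : j ≠ j + 1)]
  rw [← eraseIdx_eq_of_pair m j hj he]
  have : ((-1 : K) ^ (j+1)) = -((-1 : K) ^ j) := by ring
  rw [this, neg_smul, add_neg_cancel]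

/-- the induced map commutes with the regular boundary (chain map property). -/
theorem find_dReg_single (f : V → W) (p : List V) :
    find K f (dReg K V (Finsupp.single p 1)) = dReg K W (find K f (Finsupp.single p 1)) := by
  rw [dReg_single, find_single]
  by_cases hl : 2 ≤ p.length
  · rw [if_pos hl, map_sum]
    have key : ∀ q ∈ Finset.range p.length,
        find K f (((-1:K)^q) •
            (if Reg (p.eraseIdx q) then Finsupp.single (p.eraseIdx q) (1:K) else 0))
        = ((-1:K)^q) • (if Reg ((p.map f).eraseIdx q)
            then Finsupp.single ((p.map f).eraseIdx q) (1:K) else 0) := by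
      intro q hq
      rw [map_smul]
      congr 1
      by_cases h1 : Reg (p.eraseIdx q)
      · rw [if_pos h1, find_single, eraseIdx_map']
      · rw [if_neg h1, map_zero, eraseIdx_map', if_neg (not_reg_map f _ h1)]
    rw [Finset.sum_congr rfl key]
    by_cases hr : Reg (p.map f)
    · rw [if_pos hr, dReg_single, if_pos (by simpa using hl), List.length_map]
    · rw [if_neg hr, map_zero]
      have h0 := dReg_single_irreg K (p.map f) hr
      rw [dReg_single, if_pos (by simpa using hl), List.length_map] at h0
      exact h0
  · rw [if_neg hl, map_zero]
    by_cases hr : Reg (p.map f)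
    · rw [if_pos hr, dReg_single, if_neg (by simpa using hl)]
    · rw [if_neg hr, map_zero]

theorem find_comp_dReg (f : V → W) :
    (find K f).comp (dReg K V) = (dReg K W).comp (find K f) := by
  apply Finsupp.lhom_ext
  intro p b
  have hb : (Finsupp.single p b) = b • Finsupp.single p (1:K) := by
    rw [Finsupp.smul_single, smul_eq_mul, mul_one]
  rw [hb]
  simp only [LinearMap.comp_apply, map_smul]
  rw [find_dReg_single]

theorem find_dReg (f : V → W) (v : List V →₀ K) :
    find K f (dReg K V v) = dReg K W (find K f v) := by
  have := find_comp_dReg K f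
  exact congrFun (congrArg (fun (L : _ →ₗ[K] _) => (L : (List V →₀ K) → (List W →₀ K))) this) v

theorem find_comp_find (f : V → W) (g : W → U) :
    (find K g).comp (find K f) = find K (g ∘ f) := by
  apply Finsupp.lhom_ext
  intro p b
  have hb : (Finsupp.single p b) = b • Finsupp.single p (1:K) := by
    rw [Finsupp.smul_single, smul_eq_mul, mul_one]
  rw [hb]
  simp only [LinearMap.comp_apply, map_smul]
  congr 1
  rw [find_single]
  by_cases h1 : Reg (p.map f)
  · rw [if_pos h1, find_single, find_single, List.map_map]
  · have h2 : ¬ Reg (p.map (g ∘ f)) := by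
      rw [← List.map_map]; exact not_reg_map g _ h1
    rw [if_neg h1, map_zero, find_single, if_neg h2]

end FinsuppLemmas

end PH


namespace PH

section Prism
variable (K : Type) [Field K] {V : Type}

/-- prism of a basis path: alternating sum of the mixed cylinder paths. -/
noncomputable def Pm (p : List V) : List (V ⊕ V) →₀ K :=
  ∑ k ∈ Finset.range p.length, ((-1:K)^k) •
    (if Reg (mix p k) then Finsupp.single (mix p k) (1:K) else 0)

/-- the prism operator. -/
noncomputable def PrL : (List V →₀ K) →ₗ[K] (List (V ⊕ V) →₀ K) :=
  Finsupp.lsum K fun p => LinearMap.toSpanSingleton K (List (V ⊕ V) →₀ K) (Pm K p)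

theorem PrL_single (p : List V) : PrL K (Finsupp.single p 1) = Pm K p := by
  rw [PrL, Finsupp.lsum_single, LinearMap.toSpanSingleton_apply, one_smul]

theorem Pm_irreg (p : List V) (hp : ¬ Reg p) : Pm K p = 0 := by
  rw [Pm]
  refine Finset.sum_eq_zero ?_
  intro k hk
  rw [if_neg (fun h => hp (reg_of_mix p k h)), smul_zero]

/-- single term of the expanded boundary of the prism. -/
noncomputable def Tm (p : List V) (k q : ℕ) : List (V ⊕ V) →₀ K :=
  ((-1:K)^(k+q)) • (if Reg ((mix p k).eraseIdx q)
    then Finsupp.single ((mix p k).eraseIdx q) (1:K) else 0)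

/-- split-path basis term. -/
noncomputable def Gm (p : List V) (j : ℕ) : List (V ⊕ V) →₀ K :=
  if Reg (dSp p j) then Finsupp.single (dSp p j) (1:K) else 0

/-- single term of the prism of the boundary. -/
noncomputable def Um (p : List V) (q j : ℕ) : List (V ⊕ V) →₀ K :=
  ((-1:K)^(q+j+1)) • (if Reg (mix (p.eraseIdx q) j)
    then Finsupp.single (mix (p.eraseIdx q) j) (1:K) else 0)

theorem Tm_diag (p : List V) (k : ℕ) (hk : k < p.length) :
    Tm K p k k = Gm K p k := by
  rw [Tm, mix_erase_eq p k hk, Even.neg_one_pow ⟨k, rfl⟩, one_smul, Gm]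

theorem Tm_diag1 (p : List V) (k : ℕ) (hk : k < p.length) :
    Tm K p k (k+1) = - Gm K p (k+1) := by
  rw [Tm, mix_erase_eq1 p k hk, Odd.neg_one_pow ⟨k, by omega⟩, Gm, neg_one_smul]

theorem Tm_lt (p : List V) (k q : ℕ) (hq : q < k) (hk : k < p.length) :
    Tm K p k q = Um K p q (k-1) := by
  rw [Tm, mix_erase_lt p k q hq hk, Um, show q+(k-1)+1 = k+q by omega]

theorem Tm_gt (p : List V) (k q : ℕ) (hq : k+1 < q) (hk : k < p.length)
    (hq2 : q ≤ p.length) : Tm K p k q = Um K p (q-1) k := by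
  rw [Tm, mix_erase_gt p k q hq hk hq2, Um, show (q-1)+k+1 = k+q by omega]

theorem cross_sum (p : List V) :
    ∑ k ∈ Finset.range p.length,
      ∑ q ∈ ((Finset.range (p.length+1)).erase k).erase (k+1), Tm K p k q
    = ∑ q ∈ Finset.range p.length, ∑ j ∈ Finset.range (p.length - 1), Um K p q j := by
  rw [Finset.sum_sigma', Finset.sum_sigma']
  refine Finset.sum_nbij'
    (fun x => if x.2 < x.1 then ⟨x.2, x.1 - 1⟩ else ⟨x.2 - 1, x.1⟩)
    (fun y => if y.1 ≤ y.2 then ⟨y.2 + 1, y.1⟩ else ⟨y.2, y.1 + 1⟩) ?_ ?_ ?_ ?_ ?_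
  · rintro ⟨k, q⟩ hm
    simp only [Finset.mem_sigma, Finset.mem_erase, Finset.mem_range] at hm ⊢
    obtain ⟨hk, hq1, hq2, hq3⟩ := hm
    split_ifs <;> dsimp only <;> constructor <;> omega
  · rintro ⟨q, j⟩ hm
    simp only [Finset.mem_sigma, Finset.mem_erase, Finset.mem_range] at hm ⊢
    obtain ⟨hq, hj⟩ := hm
    split_ifs <;> dsimp only <;> refine ⟨by omega, by omega, by omega, by omega⟩
  · rintro ⟨k, q⟩ hm
    simp only [Finset.mem_sigma, Finset.mem_erase, Finset.mem_range] at hm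
    obtain ⟨hk, hq1, hq2, hq3⟩ := hm
    dsimp only
    by_cases h : q < k
    · rw [if_pos h]
      simp only [if_pos (by omega : q ≤ k - 1)]
      rw [show k - 1 + 1 = k by omega]
    · rw [if_neg h]
      simp only [if_neg (by omega : ¬ (q - 1 ≤ k))]
      rw [show q - 1 + 1 = q by omega]
  · rintro ⟨q, j⟩ hm
    simp only [Finset.mem_sigma, Finset.mem_erase, Finset.mem_range] at hm
    obtain ⟨hq, hj⟩ := hm
    dsimp only
    by_cases h : q ≤ j
    · rw [if_pos h]
      simp only [if_pos (by omega : q < j + 1)]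
      rw [show j + 1 - 1 = j by omega]
    · rw [if_neg h]
      simp only [if_neg (by omega : ¬ (q + 1 < j))]
      rw [show q + 1 - 1 = q by omega]
  · rintro ⟨k, q⟩ hm
    simp only [Finset.mem_sigma, Finset.mem_erase, Finset.mem_range] at hm
    obtain ⟨hk, hq1, hq2, hq3⟩ := hm
    dsimp only
    by_cases h : q < k
    · rw [if_pos h]
      exact Tm_lt K p k q h hk
    · rw [if_neg h]
      exact Tm_gt K p k q (by omega) hk (by omega)

theorem dReg_Pm (p : List V) :
    dReg K (V ⊕ V) (Pm K p) =
      find K Sum.inr (Finsupp.single p 1) - find K Sum.inl (Finsupp.single p 1)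
        - PrL K (dReg K V (Finsupp.single p 1)) := by
  by_cases hp : p = []
  · subst hp
    rw [Pm]
    simp only [List.length_nil, Finset.range_zero, Finset.sum_empty, map_zero]
    rw [dReg_single, if_neg (by simp), map_zero, find_single, find_single]
    simp [Reg]
  have hn : 1 ≤ p.length := by
    cases p
    · simp at hp
    · simp
  have e1 : dReg K (V ⊕ V) (Pm K p)
      = ∑ k ∈ Finset.range p.length, ∑ q ∈ Finset.range (p.length+1), Tm K p k q := by
    rw [Pm, map_sum]
    refine Finset.sum_congr rfl ?_
    intro k hk
    rw [Finset.mem_range] at hk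
    rw [map_smul]
    have e2 : dReg K (V ⊕ V) (if Reg (mix p k) then Finsupp.single (mix p k) (1:K) else 0)
        = dReg K (V ⊕ V) (Finsupp.single (mix p k) (1:K)) := by
      by_cases h : Reg (mix p k)
      · rw [if_pos h]
      · rw [if_neg h, map_zero, dReg_single_irreg K _ h]
    rw [e2, dReg_single, if_pos (by rw [length_mix p k hk]; omega), length_mix p k hk,
      Finset.smul_sum]
    refine Finset.sum_congr rfl ?_
    intro q hq
    rw [Tm, smul_smul, ← pow_add]
  have e3 : ∀ k ∈ Finset.range p.length,
      ∑ q ∈ Finset.range (p.length+1), Tm K p k q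
        = (Gm K p k - Gm K p (k+1))
          + ∑ q ∈ ((Finset.range (p.length+1)).erase k).erase (k+1), Tm K p k q := by
    intro k hk
    rw [Finset.mem_range] at hk
    rw [← Finset.add_sum_erase _ _ (by simp [Finset.mem_range]; omega : k ∈ Finset.range (p.length+1)),
      ← Finset.add_sum_erase _ _ (by
        simp only [Finset.mem_erase, Finset.mem_range]
        exact ⟨by omega, by omega⟩ : k+1 ∈ (Finset.range (p.length+1)).erase k)]
    rw [Tm_diag K p k hk, Tm_diag1 K p k hk]
    abel
  rw [e1, Finset.sum_congr rfl e3, Finset.sum_add_distrib, Finset.sum_range_sub' (Gm K p),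
    cross_sum K p]
  have e4 : Gm K p 0 = find K Sum.inr (Finsupp.single p 1) := by
    rw [Gm, dSp_zero, find_single]
  have e5 : Gm K p p.length = find K Sum.inl (Finsupp.single p 1) := by
    rw [Gm, dSp_len, find_single]
  rw [e4, e5]
  have e6 : PrL K (dReg K V (Finsupp.single p 1))
      = ∑ q ∈ Finset.range p.length, ∑ j ∈ Finset.range (p.length - 1), (- Um K p q j) := by
    rw [dReg_single]
    by_cases h2 : 2 ≤ p.length
    · rw [if_pos h2, map_sum]
      refine Finset.sum_congr rfl ?_
      intro q hq
      rw [Finset.mem_range] at hq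
      rw [map_smul]
      have e7 : PrL K (if Reg (p.eraseIdx q) then Finsupp.single (p.eraseIdx q) (1:K) else 0)
          = Pm K (p.eraseIdx q) := by
        by_cases h : Reg (p.eraseIdx q)
        · rw [if_pos h, PrL_single]
        · rw [if_neg h, map_zero, Pm_irreg K _ h]
      rw [e7, Pm, len_eraseIdx p q hq, Finset.smul_sum]
      refine Finset.sum_congr rfl ?_
      intro j hj
      rw [Um, smul_smul, ← pow_add]
      rw [show (-1:K)^(q+j) = -(-1:K)^(q+j+1) by ring, neg_smul]
    · rw [if_neg h2, map_zero]
      have hl1 : p.length = 1 := by omega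
      rw [hl1]
      simp
  rw [e6]
  simp only [Finset.sum_neg_distrib]
  abel
end Prism

end PH


namespace PH

section Mapping
variable (K : Type) [Field K] {V W : Type}

theorem dReg_comp_PrL :
    (dReg K (V ⊕ V)).comp (PrL K) =
      (find K (Sum.inr : V → V ⊕ V)) - (find K (Sum.inl : V → V ⊕ V))
        - (PrL K).comp (dReg K V) := by
  apply Finsupp.lhom_ext
  intro p b
  have hb : (Finsupp.single p b) = b • Finsupp.single p (1:K) := by
    rw [Finsupp.smul_single, smul_eq_mul, mul_one]
  rw [hb]
  simp only [LinearMap.comp_apply, LinearMap.sub_apply, map_smul]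
  rw [PrL_single, dReg_Pm]

/-- a linear map sends `supported A` into a submodule as soon as it does so on basis
vectors from `A`. -/
theorem map_supported {N : Submodule K (List W →₀ K)} {A : Set (List V)}
    (L : (List V →₀ K) →ₗ[K] (List W →₀ K))
    (hL : ∀ p ∈ A, L (Finsupp.single p 1) ∈ N) :
    ∀ v ∈ Finsupp.supported K K A, L v ∈ N := by
  intro v hv
  rw [Finsupp.supported_eq_span_single] at hv
  refine Submodule.span_induction ?_ ?_ ?_ ?_ hv
  · rintro x ⟨p, hp, rfl⟩
    exact hL p hp
  · rw [map_zero]; exact N.zero_mem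
  · intro x y hx hy hx' hy'
    rw [map_add]; exact N.add_mem hx' hy'
  · intro a x hx hx'
    rw [map_smul]; exact N.smul_mem a hx'

theorem find_mem_Asub {P : Set (List V)} {S : Set (List W)} {f : V → W}
    (hf : IsWeakMor P S f) (n : ℕ) :
    ∀ v ∈ Asub K P n, find K f v ∈ Asub K S n := by
  refine map_supported K _ ?_
  rintro p ⟨hp, hlen, hreg⟩
  rw [find_single]
  by_cases h : Reg (p.map f)
  · rw [if_pos h]
    refine Finsupp.single_mem_supported K 1 ?_
    refine ⟨?_, by simpa using hlen, h⟩
    rcases hf p hp with h' | h'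
    · exact h'
    · exact absurd h h'
  · rw [if_neg h]
    exact (Asub K S n).zero_mem

theorem dReg_zero_of_Asub_zero {P : Set (List V)} :
    ∀ v ∈ Asub K P 0, dReg K V v = 0 := by
  have : ∀ v ∈ Asub K P 0, dReg K V v ∈ (⊥ : Submodule K (List V →₀ K)) := by
    refine map_supported K _ ?_
    rintro p ⟨hp, hlen, hreg⟩
    rw [dReg_single, if_neg (by omega)]
    exact Submodule.zero_mem ⊥
  intro v hv
  simpa using this v hv

theorem find_id_of_reg_supported {A : Set (List V)} (hA : ∀ p ∈ A, Reg p) :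
    ∀ v ∈ Finsupp.supported K K A, find K (id : V → V) v = v := by
  intro v hv
  rw [Finsupp.supported_eq_span_single] at hv
  refine Submodule.span_induction ?_ ?_ ?_ ?_ hv
  · rintro x ⟨p, hp, rfl⟩
    rw [find_single, List.map_id, if_pos (hA p hp)]
  · rw [map_zero]
  · intro x y _ _ hx' hy'
    rw [map_add, hx', hy']
  · intro a x _ hx'
    rw [map_smul, hx']

theorem Pm_mem_Asub {P : Set (List V)} {p : List V} (n : ℕ) (hp : p ∈ P)
    (hlen : p.length = n + 1) : Pm K p ∈ Asub K (cylSet P) (n + 1) := by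
  rw [Pm]
  refine Submodule.sum_mem _ ?_
  intro k hk
  rw [Finset.mem_range] at hk
  refine Submodule.smul_mem _ _ ?_
  by_cases h : Reg (mix p k)
  · rw [if_pos h]
    refine Finsupp.single_mem_supported K 1 ?_
    exact ⟨mix_mem_cylSet hp k hk, by rw [length_mix p k hk, hlen], h⟩
  · rw [if_neg h]
    exact Submodule.zero_mem _

theorem PrL_mem_Asub {P : Set (List V)} (n : ℕ) :
    ∀ v ∈ Asub K P n, PrL K v ∈ Asub K (cylSet P) (n + 1) := by
  refine map_supported K _ ?_
  rintro p ⟨hp, hlen, hreg⟩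
  rw [PrL_single]
  exact Pm_mem_Asub K n hp hlen

/-- weak morphisms map `Ω` to `Ω`. -/
theorem find_mem_Omega {P : Set (List V)} {S : Set (List W)} {f : V → W}
    (hf : IsWeakMor P S f) (n : ℕ) :
    ∀ v ∈ OmegaSub K P n, find K f v ∈ OmegaSub K S n := by
  intro v hv
  rw [OmegaSub, Submodule.mem_inf] at hv
  obtain ⟨hv1, hv2⟩ := hv
  rw [OmegaSub, Submodule.mem_inf]
  refine ⟨find_mem_Asub K hf n v hv1, ?_⟩
  rw [Submodule.mem_comap] at hv2 ⊢
  rw [← find_dReg]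
  exact find_mem_Asub K hf (n-1) _ hv2

end Mapping

end PH


namespace PH

section Homotopy
variable (K : Type) [Field K] {V W U : Type}

theorem isWeakMor_id (P : Set (List V)) : IsWeakMor P P (id : V → V) := by
  intro p hp
  rw [List.map_id]
  exact Or.inl hp

theorem isWeakMor_comp {P : Set (List V)} {S : Set (List W)} {R : Set (List U)}
    {f : V → W} {g : W → U} (hf : IsWeakMor P S f) (hg : IsWeakMor S R g) :
    IsWeakMor P R (g ∘ f) := by
  intro p hp
  rcases hf p hp with h | h
  · rcases hg _ h with h' | h'
    · left; rw [← List.map_map]; exact h'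
    · right; rw [← List.map_map]; exact h'
  · right; rw [← List.map_map]; exact not_reg_map g _ h

theorem isWeakMor_inl {P : Set (List V)} {S : Set (List W)} {F : V ⊕ V → W}
    (hF : IsWeakMor (cylSet P) S F) : IsWeakMor P S (F ∘ Sum.inl) := by
  intro p hp
  have hmem : (p.map Sum.inl) ∈ cylSet P := Or.inl ⟨p, hp, rfl⟩
  rcases hF _ hmem with h | h
  · left; rw [← List.map_map]; exact h
  · right; rw [← List.map_map]; exact h

theorem isWeakMor_inr {P : Set (List V)} {S : Set (List W)} {F : V ⊕ V → W}
    (hF : IsWeakMor (cylSet P) S F) : IsWeakMor P S (F ∘ Sum.inr) := by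
  intro p hp
  have hmem : (p.map Sum.inr) ∈ cylSet P := Or.inr (Or.inl ⟨p, hp, rfl⟩)
  rcases hF _ hmem with h | h
  · left; rw [← List.map_map]; exact h
  · right; rw [← List.map_map]; exact h

/-- the fundamental identity for the prism chain homotopy attached to a cylinder
weak morphism `F`. -/
theorem cyl_identity {P : Set (List V)} {S : Set (List W)} {F : V ⊕ V → W}
    (hF : IsWeakMor (cylSet P) S F) :
    (∀ n, ∀ v ∈ OmegaSub K P n,
        ((find K F).comp (PrL K)) v ∈ OmegaSub K S (n+1)) ∧
    (∀ v : List V →₀ K,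
        dReg K W (((find K F).comp (PrL K)) v)
          = find K (F ∘ Sum.inr) v - find K (F ∘ Sum.inl) v
            - ((find K F).comp (PrL K)) (dReg K V v)) := by
  have hid : ∀ v : List V →₀ K,
      dReg K W (((find K F).comp (PrL K)) v)
        = find K (F ∘ Sum.inr) v - find K (F ∘ Sum.inl) v
          - ((find K F).comp (PrL K)) (dReg K V v) := by
    intro v
    rw [LinearMap.comp_apply, ← find_dReg]
    have hB : dReg K (V ⊕ V) (PrL K v)
        = find K (Sum.inr : V → V ⊕ V) v - find K (Sum.inl : V → V ⊕ V) v
          - PrL K (dReg K V v) := by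
      have := dReg_comp_PrL K (V := V)
      have h2 := congrArg (fun (L : (List V →₀ K) →ₗ[K] (List (V ⊕ V) →₀ K)) => L v) this
      simpa using h2
    rw [hB, map_sub, map_sub]
    have hr : find K F (find K (Sum.inr : V → V ⊕ V) v) = find K (F ∘ Sum.inr) v := by
      have := congrArg (fun (L : (List V →₀ K) →ₗ[K] (List W →₀ K)) => L v)
        (find_comp_find K (Sum.inr : V → V ⊕ V) F)
      simpa using this
    have hl : find K F (find K (Sum.inl : V → V ⊕ V) v) = find K (F ∘ Sum.inl) v := by
      have := congrArg (fun (L : (List V →₀ K) →ₗ[K] (List W →₀ K)) => L v)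
        (find_comp_find K (Sum.inl : V → V ⊕ V) F)
      simpa using this
    rw [hr, hl, LinearMap.comp_apply]
  refine ⟨?_, hid⟩
  intro n v hv
  rw [OmegaSub, Submodule.mem_inf] at hv
  obtain ⟨hv1, hv2⟩ := hv
  rw [OmegaSub, Submodule.mem_inf]
  constructor
  · rw [LinearMap.comp_apply]
    exact find_mem_Asub K hF (n+1) _ (PrL_mem_Asub K n v hv1)
  · rw [Submodule.mem_comap, hid v]
    have m1 : find K (F ∘ Sum.inr) v ∈ Asub K S n :=
      find_mem_Asub K (isWeakMor_inr hF) n v hv1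
    have m2 : find K (F ∘ Sum.inl) v ∈ Asub K S n :=
      find_mem_Asub K (isWeakMor_inl hF) n v hv1
    have m3 : ((find K F).comp (PrL K)) (dReg K V v) ∈ Asub K S n := by
      cases n with
      | zero =>
        rw [dReg_zero_of_Asub_zero K v hv1, map_zero]
        exact Submodule.zero_mem _
      | succ m =>
        rw [Submodule.mem_comap] at hv2
        rw [LinearMap.comp_apply]
        have : dReg K V v ∈ Asub K P m := by simpa using hv2
        exact find_mem_Asub K hF (m+1) _ (PrL_mem_Asub K m _ this)
    have hsub : (n + 1) - 1 = n := by omega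
    rw [hsub]
    exact Submodule.sub_mem _ (Submodule.sub_mem _ m1 m2) m3

theorem wOneStep_chainHomotopy {P : Set (List V)} {S : Set (List W)} {f g : V → W}
    (h1 : WOneStep P S f g) :
    ∃ T : (List V →₀ K) →ₗ[K] (List W →₀ K),
      (∀ n, ∀ v ∈ OmegaSub K P n, T v ∈ OmegaSub K S (n+1)) ∧
      (∀ v, find K f v - find K g v = dReg K W (T v) + T (dReg K V v)) := by
  obtain ⟨F, hF, hcase⟩ := h1
  obtain ⟨hmem, hid⟩ := cyl_identity K hF
  rcases hcase with ⟨hl, hr⟩ | ⟨hl, hr⟩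
  · -- F∘inl = f, F∘inr = g : take T = -((find F) ∘ PrL)
    have hfl : F ∘ Sum.inl = f := funext hl
    have hgr : F ∘ Sum.inr = g := funext hr
    refine ⟨-((find K F).comp (PrL K)), ?_, ?_⟩
    · intro n v hv
      exact Submodule.neg_mem _ (hmem n v hv)
    · intro v
      have := hid v
      rw [hfl, hgr] at this
      rw [LinearMap.neg_apply, LinearMap.neg_apply, map_neg]
      rw [eq_comm]
      rw [this]
      abel
  · -- F∘inl = g, F∘inr = f : take T = (find F) ∘ PrL
    have hfl : F ∘ Sum.inl = g := funext hl
    have hgr : F ∘ Sum.inr = f := funext hr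
    refine ⟨(find K F).comp (PrL K), hmem, ?_⟩
    · intro v
      have := hid v
      rw [hfl, hgr] at this
      rw [this]
      abel

theorem wHomotopic_chainHomotopy {P : Set (List V)} {S : Set (List W)} {f g : V → W}
    (h : WHomotopic P S f g) :
    ∃ T : (List V →₀ K) →ₗ[K] (List W →₀ K),
      (∀ n, ∀ v ∈ OmegaSub K P n, T v ∈ OmegaSub K S (n+1)) ∧
      (∀ v, find K f v - find K g v = dReg K W (T v) + T (dReg K V v)) := by
  induction h with
  | refl =>
    refine ⟨0, ?_, ?_⟩
    · intro n v hv
      simp only [LinearMap.zero_apply]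
      exact Submodule.zero_mem _
    · intro v
      simp
  | @tail b c hab hbc ih =>
    obtain ⟨T1, hT1m, hT1⟩ := ih
    obtain ⟨T2, hT2m, hT2⟩ := wOneStep_chainHomotopy K hbc.2.2
    refine ⟨T1 + T2, ?_, ?_⟩
    · intro n v hv
      simp only [LinearMap.add_apply]
      exact Submodule.add_mem _ (hT1m n v hv) (hT2m n v hv)
    · intro v
      have e : find K f v - find K c v
          = (find K f v - find K b v) + (find K b v - find K c v) := by abel
      rw [e, hT1 v, hT2 v]
      simp only [LinearMap.add_apply, map_add]
      abel

theorem find_mem_Zsub {P : Set (List V)} {S : Set (List W)} {f : V → W}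
    (hf : IsWeakMor P S f) (n : ℕ) :
    ∀ z ∈ Zsub K P n, find K f z ∈ Zsub K S n := by
  intro z hz
  rw [Zsub, Submodule.mem_inf] at hz ⊢
  obtain ⟨hz1, hz2⟩ := hz
  refine ⟨find_mem_Omega K hf n z hz1, ?_⟩
  rw [LinearMap.mem_ker] at hz2 ⊢
  rw [← find_dReg, hz2, map_zero]

theorem find_mem_Bsub {P : Set (List V)} {S : Set (List W)} {f : V → W}
    (hf : IsWeakMor P S f) (n : ℕ) :
    ∀ b ∈ Bsub K P n, find K f b ∈ Bsub K S n := by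
  intro b hb
  rw [Bsub, Submodule.mem_map] at hb ⊢
  obtain ⟨w, hw, rfl⟩ := hb
  exact ⟨find K f w, find_mem_Omega K hf (n+1) w hw, (find_dReg K f w).symm⟩

end Homotopy

end PH

theorem statement10 (K : Type) [Field K] (V W : Type) [Fintype V] [Fintype W]
    (P : PH.PathComplex V) (S : PH.PathComplex W)
    (h0 : ∀ v : V, [v] ∈ P.carrier) (h0' : ∀ w : W, [w] ∈ S.carrier) :
    -- weakly homotopic weak morphisms induce chain homotopic chain maps,
    -- hence the same map on path homology
    (∀ f g : V → W, PH.IsWeakMor P.carrier S.carrier f →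
      PH.IsWeakMor P.carrier S.carrier g → PH.WHomotopic P.carrier S.carrier f g →
      ((∃ T : ℕ → ((List V →₀ K) →ₗ[K] (List W →₀ K)),
          (∀ (n : ℕ) (v : List V →₀ K), v ∈ PH.OmegaSub K P.carrier n →
              T n v ∈ PH.OmegaSub K S.carrier (n + 1)) ∧
          (∀ (n : ℕ) (v : List V →₀ K), v ∈ PH.OmegaSub K P.carrier n →
              PH.find K f v - PH.find K g v =
                PH.dReg K W (T n v) + T (n - 1) (PH.dReg K V v))) ∧
        (∀ (n : ℕ) (z : List V →₀ K), z ∈ PH.Zsub K P.carrier n →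
            PH.find K f z ∈ PH.Zsub K S.carrier n ∧
            PH.find K g z ∈ PH.Zsub K S.carrier n ∧
            PH.find K f z - PH.find K g z ∈ PH.Bsub K S.carrier n))) ∧
    -- a weak homotopy equivalence realized by f, g gives mutually inverse isomorphisms
    (∀ (f : V → W) (g : W → V), PH.IsWeakMor P.carrier S.carrier f →
      PH.IsWeakMor S.carrier P.carrier g →
      PH.WHomotopic P.carrier P.carrier (g ∘ f) id →
      PH.WHomotopic S.carrier S.carrier (f ∘ g) id →
      (∀ n : ℕ, Nonempty ((PH.Hsm K P.carrier n) ≃ₗ[K] (PH.Hsm K S.carrier n))) ∧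
      (∀ (n : ℕ) (z : List V →₀ K), z ∈ PH.Zsub K P.carrier n →
          PH.find K g (PH.find K f z) - z ∈ PH.Bsub K P.carrier n) ∧
      (∀ (n : ℕ) (z : List W →₀ K), z ∈ PH.Zsub K S.carrier n →
          PH.find K f (PH.find K g z) - z ∈ PH.Bsub K S.carrier n))  := by
  constructor
  · -- part 1
    intro f g hf hg hfg
    obtain ⟨T0, hTm, hTe⟩ := PH.wHomotopic_chainHomotopy K hfg
    constructor
    · exact ⟨fun _ => T0, fun n v hv => hTm n v hv, fun n v _ => hTe v⟩
    · intro n z hz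
      have hz' := hz
      rw [PH.Zsub, Submodule.mem_inf] at hz'
      obtain ⟨hz1, hz2⟩ := hz'
      rw [LinearMap.mem_ker] at hz2
      refine ⟨PH.find_mem_Zsub K hf n z hz, PH.find_mem_Zsub K hg n z hz, ?_⟩
      have heq := hTe z
      rw [hz2, map_zero, add_zero] at heq
      rw [heq, PH.Bsub, Submodule.mem_map]
      exact ⟨T0 z, hTm n z hz1, rfl⟩
  · -- part 2
    intro f g hf hg hgf hfg
    have hregP : ∀ (n : ℕ), ∀ p ∈ {l : List V | l ∈ P.carrier ∧ l.length = n + 1 ∧ PH.Reg l},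
        PH.Reg p := fun n p hp => hp.2.2
    have hregS : ∀ (n : ℕ), ∀ p ∈ {l : List W | l ∈ S.carrier ∧ l.length = n + 1 ∧ PH.Reg l},
        PH.Reg p := fun n p hp => hp.2.2
    have key1 : ∀ (n : ℕ), ∀ z ∈ PH.Zsub K P.carrier n,
        PH.find K g (PH.find K f z) - z ∈ PH.Bsub K P.carrier n := by
      intro n z hz
      obtain ⟨T0, hTm, hTe⟩ := PH.wHomotopic_chainHomotopy K hgf
      have hz' := hz
      rw [PH.Zsub, Submodule.mem_inf] at hz'
      obtain ⟨hz1, hz2⟩ := hz'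
      rw [LinearMap.mem_ker] at hz2
      have hzA : z ∈ PH.Asub K P.carrier n := by
        rw [PH.OmegaSub, Submodule.mem_inf] at hz1
        exact hz1.1
      have e1 : PH.find K (g ∘ f) z = PH.find K g (PH.find K f z) := by
        have := congrArg (fun (L : (List V →₀ K) →ₗ[K] (List V →₀ K)) => L z)
          (PH.find_comp_find K f g)
        simpa using this.symm
      have e2 : PH.find K (id : V → V) z = z := by
        rw [PH.Asub] at hzA
        exact PH.find_id_of_reg_supported K (hregP n) z hzA
      have heq := hTe z
      rw [hz2, map_zero, add_zero, e1, e2] at heq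
      rw [heq, PH.Bsub, Submodule.mem_map]
      exact ⟨T0 z, hTm n z hz1, rfl⟩
    have key2 : ∀ (n : ℕ), ∀ z ∈ PH.Zsub K S.carrier n,
        PH.find K f (PH.find K g z) - z ∈ PH.Bsub K S.carrier n := by
      intro n z hz
      obtain ⟨T0, hTm, hTe⟩ := PH.wHomotopic_chainHomotopy K hfg
      have hz' := hz
      rw [PH.Zsub, Submodule.mem_inf] at hz'
      obtain ⟨hz1, hz2⟩ := hz'
      rw [LinearMap.mem_ker] at hz2
      have hzA : z ∈ PH.Asub K S.carrier n := by
        rw [PH.OmegaSub, Submodule.mem_inf] at hz1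
        exact hz1.1
      have e1 : PH.find K (f ∘ g) z = PH.find K f (PH.find K g z) := by
        have := congrArg (fun (L : (List W →₀ K) →ₗ[K] (List W →₀ K)) => L z)
          (PH.find_comp_find K g f)
        simpa using this.symm
      have e2 : PH.find K (id : W → W) z = z := by
        rw [PH.Asub] at hzA
        exact PH.find_id_of_reg_supported K (hregS n) z hzA
      have heq := hTe z
      rw [hz2, map_zero, add_zero, e1, e2] at heq
      rw [heq, PH.Bsub, Submodule.mem_map]
      exact ⟨T0 z, hTm n z hz1, rfl⟩
    refine ⟨?_, key1, key2⟩
    intro n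
    have hker1 : PH.Bsub K P.carrier n ≤
        LinearMap.ker ((PH.Bsub K S.carrier n).mkQ.comp (PH.find K f)) := by
      intro b hb
      rw [LinearMap.mem_ker, LinearMap.comp_apply, Submodule.mkQ_apply,
        Submodule.Quotient.mk_eq_zero]
      exact PH.find_mem_Bsub K hf n b hb
    have hker2 : PH.Bsub K S.carrier n ≤
        LinearMap.ker ((PH.Bsub K P.carrier n).mkQ.comp (PH.find K g)) := by
      intro b hb
      rw [LinearMap.mem_ker, LinearMap.comp_apply, Submodule.mkQ_apply,
        Submodule.Quotient.mk_eq_zero]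
      exact PH.find_mem_Bsub K hg n b hb
    set Qf := (PH.Bsub K P.carrier n).liftQ
      ((PH.Bsub K S.carrier n).mkQ.comp (PH.find K f)) hker1 with hQfdef
    set Qg := (PH.Bsub K S.carrier n).liftQ
      ((PH.Bsub K P.carrier n).mkQ.comp (PH.find K g)) hker2 with hQgdef
    have hQfmk : ∀ z : List V →₀ K, Qf (Submodule.Quotient.mk z)
        = Submodule.Quotient.mk (PH.find K f z) := by
      intro z
      rw [hQfdef, Submodule.liftQ_apply, LinearMap.comp_apply, Submodule.mkQ_apply]
    have hQgmk : ∀ z : List W →₀ K, Qg (Submodule.Quotient.mk z)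
        = Submodule.Quotient.mk (PH.find K g z) := by
      intro z
      rw [hQgdef, Submodule.liftQ_apply, LinearMap.comp_apply, Submodule.mkQ_apply]
    have hQf : ∀ x ∈ PH.Hsm K P.carrier n, Qf x ∈ PH.Hsm K S.carrier n := by
      intro x hx
      rw [PH.Hsm, Submodule.mem_map] at hx ⊢
      obtain ⟨z, hz, rfl⟩ := hx
      refine ⟨PH.find K f z, PH.find_mem_Zsub K hf n z hz, ?_⟩
      rw [Submodule.mkQ_apply, Submodule.mkQ_apply, hQfmk]
    have hQg : ∀ x ∈ PH.Hsm K S.carrier n, Qg x ∈ PH.Hsm K P.carrier n := by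
      intro x hx
      rw [PH.Hsm, Submodule.mem_map] at hx ⊢
      obtain ⟨z, hz, rfl⟩ := hx
      refine ⟨PH.find K g z, PH.find_mem_Zsub K hg n z hz, ?_⟩
      rw [Submodule.mkQ_apply, Submodule.mkQ_apply, hQgmk]
    refine ⟨LinearEquiv.ofLinear (Qf.restrict hQf) (Qg.restrict hQg) ?_ ?_⟩
    · apply LinearMap.ext
      rintro ⟨x, hx⟩
      apply Subtype.ext
      rw [LinearMap.comp_apply, LinearMap.id_apply]
      rw [LinearMap.restrict_apply, LinearMap.restrict_apply]
      have hx' := hx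
      rw [PH.Hsm, Submodule.mem_map] at hx'
      obtain ⟨z, hz, hzx⟩ := hx'
      rw [Submodule.mkQ_apply] at hzx
      simp only
      rw [← hzx, hQgmk, hQfmk, Submodule.Quotient.eq]
      exact key2 n z hz
    · apply LinearMap.ext
      rintro ⟨x, hx⟩
      apply Subtype.ext
      rw [LinearMap.comp_apply, LinearMap.id_apply]
      rw [LinearMap.restrict_apply, LinearMap.restrict_apply]
      have hx' := hx
      rw [PH.Hsm, Submodule.mem_map] at hx'
      obtain ⟨z, hz, hzx⟩ := hx'
      rw [Submodule.mkQ_apply] at hzx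
      simp only
      rw [← hzx, hQfmk, hQgmk, Submodule.Quotient.eq]
      exact key1 n z hz
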